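/- Let p ≥ 3 and k ≥ 1 be integers and let G = G^{p−2,1}_{p,pk−1}. Set z = (yx)^{1−2k}((yx)^{k−1}y)^2. Then in G the following identity holds: ((yx)^{k−1}y)^2 (z (yx)^{k−1} y)^{p−2} = x (yx)^{k−1} (y (yx)^{k−1} y)^{p−2} (yx)^{k−1} y. (The left-hand side is the longitude word λ' of the twisted torus knot T^{p−2,1}_{p,pk−1}.) -/

import Mathlib

def X : FreeGroup (Fin 2) := FreeGroup.of 0
def Y : FreeGroup (Fin 2) := FreeGroup.of 1

/-- The word `z = (yx)^{1-2k}((yx)^{k-1}y)^2`. -/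
def Zw (k : ℤ) : FreeGroup (Fin 2) :=
  (Y * X) ^ (1 - 2 * k) * ((Y * X) ^ (k - 1) * Y) ^ (2 : ℤ)

/-- The relator of the knot group `G^{p-2,1}_{p,pk-1}`:
`((yx)^{k-1}y)^2(z(yx)^{k-1}y)^{p-3} = x(yx)^{2k-1}(z(yx)^k)^{p-3}`. -/
def relC (p k : ℤ) : FreeGroup (Fin 2) :=
  ((Y * X) ^ (k - 1) * Y) ^ (2 : ℤ) * (Zw k * (Y * X) ^ (k - 1) * Y) ^ (p - 3) *
    (X * (Y * X) ^ (2 * k - 1) * (Zw k * (Y * X) ^ k) ^ (p - 3))⁻¹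

/-- Abstract group-theoretic computation behind the longitude identity. -/
lemma key_calc {G : Type*} [Group G] (x y z : G) (p k : ℤ)
    (hz : z = (y * x) ^ (1 - 2 * k) * ((y * x) ^ (k - 1) * y) ^ (2 : ℤ))
    (hrel : ((y * x) ^ (k - 1) * y) ^ (2 : ℤ) * (z * (y * x) ^ (k - 1) * y) ^ (p - 3) =
      x * (y * x) ^ (2 * k - 1) * (z * (y * x) ^ k) ^ (p - 3)) :
    ((y * x) ^ (k - 1) * y) ^ (2 : ℤ) * (z * (y * x) ^ (k - 1) * y) ^ (p - 2) =
      x * (y * x) ^ (k - 1) * (y * (y * x) ^ (k - 1) * y) ^ (p - 2) *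
        (y * x) ^ (k - 1) * y := by
  set u := y * x with hu
  set a := u ^ (k - 1) * y with ha
  set b := a ^ (2 : ℤ) * u ^ (1 - k) with hb
  have h5 : z * u ^ (k - 1) * y = z * a := by rw [ha, mul_assoc]
  have h1 : z * u ^ k = u ^ (1 - 2 * k) * b * (u ^ (1 - 2 * k))⁻¹ := by
    rw [hz, hb]; group
  have h2 : (z * u ^ k) ^ (p - 3) = u ^ (1 - 2 * k) * b ^ (p - 3) * (u ^ (1 - 2 * k))⁻¹ := by
    rw [h1, conj_zpow]
  have h3 : y * u ^ (k - 1) * y = u ^ (1 - k) * b * (u ^ (1 - k))⁻¹ := by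
    rw [hb, ha]; simp only [zpow_two]; group
  have h4 : (y * u ^ (k - 1) * y) ^ (p - 2) =
      u ^ (1 - k) * b ^ (p - 2) * (u ^ (1 - k))⁻¹ := by
    rw [h3, conj_zpow]
  have e1 : (z * a) ^ (p - 2) = (z * a) ^ (p - 3) * (z * a) := by
    rw [show p - 2 = p - 3 + 1 by ring, zpow_add_one]
  have e2 : b ^ (p - 2) = b ^ (p - 3) * b := by
    rw [show p - 2 = p - 3 + 1 by ring, zpow_add_one]
  rw [h5] at hrel ⊢
  rw [h4, e1, e2, ← mul_assoc, hrel, h2]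
  generalize b ^ (p - 3) = c
  rw [hb, hz, ha]
  simp only [zpow_two]
  group

theorem statement6 (p k : ℤ) (hp : 3 ≤ p) (hk : 1 ≤ k)
    (x y z : PresentedGroup ({relC p k} : Set (FreeGroup (Fin 2))))
    (hx : x = PresentedGroup.of 0) (hy : y = PresentedGroup.of 1)
    (hz : z = (y * x) ^ (1 - 2 * k) * ((y * x) ^ (k - 1) * y) ^ (2 : ℤ)) :
    ((y * x) ^ (k - 1) * y) ^ (2 : ℤ) * (z * (y * x) ^ (k - 1) * y) ^ (p - 2) =
      x * (y * x) ^ (k - 1) * (y * (y * x) ^ (k - 1) * y) ^ (p - 2) *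
        (y * x) ^ (k - 1) * y := by
  set π := PresentedGroup.mk ({relC p k} : Set (FreeGroup (Fin 2))) with hπ
  have h1 : π (relC p k) = 1 := by
    exact PresentedGroup.one_of_mem (Set.mem_singleton _)
  have hXx : π X = x := by rw [hx]; rfl
  have hYy : π Y = y := by rw [hy]; rfl
  have hZw : π (Zw k) = (π Y * π X) ^ (1 - 2 * k) * ((π Y * π X) ^ (k - 1) * π Y) ^ (2 : ℤ) := by
    rw [Zw]; simp only [map_mul, map_zpow]
  have hZz : π (Zw k) = z := by rw [hZw, hXx, hYy, hz]
  change π (((Y * X) ^ (k - 1) * Y) ^ (2 : ℤ) * (Zw k * (Y * X) ^ (k - 1) * Y) ^ (p - 3) *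
    (X * (Y * X) ^ (2 * k - 1) * (Zw k * (Y * X) ^ k) ^ (p - 3))⁻¹) = 1 at h1
  simp only [map_mul, map_zpow, map_inv] at h1
  rw [mul_inv_eq_one] at h1
  rw [← hXx, ← hYy, ← hZz]
  exact key_calc (π X) (π Y) (π (Zw k)) p k hZw h1
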